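/- Let K be a field, H ≤ Aut(K) a subgroup, and G = PGL(2, K) ⋊ H ≤ PΓL(2, K). Then for every ordinal α, N^α_{PΓL(2,K)}(G) = PGL(2, K) ⋊ N^α_{Aut(K)}(H). -/

import Mathlib

open Matrix

variable (K : Type*) [Field K]

/-- `GL(2, K)`. -/
abbrev GL2 := Matrix.GeneralLinearGroup (Fin 2) K

/-- `PGL(2, K) = GL(2, K)/Z(GL(2, K))`. -/
abbrev PGL2 := GL2 K ⧸ Subgroup.center (GL2 K)

/-- An isomorphism of groups maps the center onto the center. -/
theorem mapCenterEq {G H : Type*} [Group G] [Group H] (e : G ≃* H) :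
    (Subgroup.center G).map e.toMonoidHom = Subgroup.center H := by
  ext x
  constructor
  · rintro ⟨y, hy, rfl⟩
    rw [SetLike.mem_coe, Subgroup.mem_center_iff] at hy
    rw [Subgroup.mem_center_iff]
    intro h
    simpa using congrArg e (hy (e.symm h))
  · intro hx
    rw [Subgroup.mem_center_iff] at hx
    refine ⟨e.symm x, ?_, e.apply_symm_apply x⟩
    rw [SetLike.mem_coe, Subgroup.mem_center_iff]
    intro g
    simpa using congrArg e.symm (hx (e g))

/-- The action of a field automorphism on `GL(2, K)`, entrywise. -/
def glMapEquiv (σ : K ≃+* K) : GL2 K ≃* GL2 K :=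
  Units.mapEquiv (RingEquiv.mapMatrix σ).toMulEquiv

/-- The induced action of a field automorphism on `PGL(2, K)`. -/
def pglAut (σ : K ≃+* K) : PGL2 K ≃* PGL2 K :=
  QuotientGroup.congr _ _ (glMapEquiv K σ) (mapCenterEq _)

/-- The homomorphism `Aut(K) → Aut(PGL(2, K))`. -/
def pglAutHom : RingAut K →* MulAut (PGL2 K) where
  toFun σ := pglAut K σ
  map_one' := by
    ext x
    refine QuotientGroup.induction_on x ?_
    intro g
    rfl
  map_mul' σ τ := by
    ext x
    refine QuotientGroup.induction_on x ?_
    intro g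
    rfl

/-- `PΓL(2, K) = PGL(2, K) ⋊ Aut(K)`. -/
abbrev PGammaL := SemidirectProduct (PGL2 K) (RingAut K) (pglAutHom K)

/-- The embedding of `PSL(2, K)` (as the image of `SL(2, K)`) into `PΓL(2, K)`. -/
def pslToPGammaL : Matrix.SpecialLinearGroup (Fin 2) K →* PGammaL K :=
  SemidirectProduct.inl.comp
    ((QuotientGroup.mk' (Subgroup.center (GL2 K))).comp
      Matrix.SpecialLinearGroup.toGL)


/-- The normalizer tower of a subgroup `H` of `G`: `N⁰ = H`, `N^{α+1} = N_G(N^α)`,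
unions at limit ordinals. -/
noncomputable def normalizerTower {G : Type*} [Group G] (H : Subgroup G) (o : Ordinal) :
    Subgroup G :=
  Ordinal.limitRecOn o H (fun _ N => Subgroup.normalizer (N : Set _))
    (fun o _ ih => ⨆ (β : Ordinal) (h : β < o), ih β h)

lemma comap_iSup_of_surjective {G N : Type*} [Group G] [Group N] {f : G →* N}
    (hf : Function.Surjective f) {ι : Sort*} [Nonempty ι] (S : ι → Subgroup N) :
    Subgroup.comap f (⨆ i, S i) = ⨆ i, Subgroup.comap f (S i) := by
  have h1 : Subgroup.map f (⨆ i, Subgroup.comap f (S i)) = ⨆ i, S i := by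
    rw [Subgroup.map_iSup]
    exact iSup_congr fun i => Subgroup.map_comap_eq_self_of_surjective hf _
  have h2 : f.ker ≤ ⨆ i, Subgroup.comap f (S i) :=
    (Subgroup.ker_le_comap f _).trans
      (le_iSup (fun i => Subgroup.comap f (S i)) (Classical.arbitrary ι))
  rw [← h1, Subgroup.comap_map_eq, sup_eq_left.2 h2]

lemma normalizerTower_zero {G : Type*} [Group G] (H : Subgroup G) :
    normalizerTower H 0 = H := Ordinal.limitRecOn_zero ..

lemma normalizerTower_succ {G : Type*} [Group G] (H : Subgroup G) (o : Ordinal) :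
    normalizerTower H (Order.succ o) = Subgroup.normalizer (normalizerTower H o : Set G) :=
  Ordinal.limitRecOn_succ ..

lemma normalizerTower_limit {G : Type*} [Group G] (H : Subgroup G) {o : Ordinal}
    (h : Order.IsSuccLimit o) :
    normalizerTower H o = ⨆ (β : Ordinal) (_ : β < o), normalizerTower H β :=
  Ordinal.limitRecOn_limit _ _ _ _ h

/-- Let `K` be a field, `H ≤ Aut(K)`, and `G = PGL(2, K) ⋊ H ≤ PΓL(2, K)`
(realized as the preimage of `H` under the projection `PΓL(2, K) → Aut(K)`).
Then for every ordinal `α`,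
`N^α_{PΓL(2,K)}(G) = PGL(2, K) ⋊ N^α_{Aut(K)}(H)`. -/
theorem stmt5 (H : Subgroup (RingAut K)) :
    ∀ α : Ordinal,
      normalizerTower
          (Subgroup.comap (SemidirectProduct.rightHom : PGammaL K →* RingAut K) H) α
        = Subgroup.comap (SemidirectProduct.rightHom : PGammaL K →* RingAut K)
            (normalizerTower H α) := by
  intro α
  induction α using Ordinal.limitRecOn with
  | zero => rw [normalizerTower_zero, normalizerTower_zero]
  | add_one o ih =>
    rw [← Order.succ_eq_add_one, normalizerTower_succ, normalizerTower_succ, ih,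
      Subgroup.comap_normalizer_eq_of_surjective _ SemidirectProduct.rightHom_surjective]
  | limit o ho ih =>
    haveI : Nonempty {β : Ordinal // β < o} := ⟨⟨0, ho.pos⟩⟩
    rw [normalizerTower_limit _ ho, normalizerTower_limit _ ho, iSup_subtype', iSup_subtype',
      comap_iSup_of_surjective SemidirectProduct.rightHom_surjective]
    exact iSup_congr fun β => ih β β.2
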